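/- If a vertex u of a biconnected graph G is adjacent to three distinct vertices x, y, z each of degree 2 in G, then G contains K_{2,3} as a minor. -/

import Mathlib

open SimpleGraph

universe u₁ u₂

variable {V : Type u₁} {W : Type u₂}

/-- `H` is a minor of `G`: there is a branch decomposition, i.e. a partial map
assigning to some vertices of `G` a vertex of `H`, whose branch sets are
nonempty and connected, and such that every edge of `H` is realized by an
edge of `G` between the corresponding branch sets. -/
def IsMinorOf (H : SimpleGraph W) (G : SimpleGraph V) : Prop :=
  ∃ f : V → Option W,
    (∀ w : W, (G.induce {v | f v = some w}).Connected) ∧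
    (∀ w₁ w₂ : W, H.Adj w₁ w₂ →
      ∃ v₁ v₂ : V, f v₁ = some w₁ ∧ f v₂ = some w₂ ∧ G.Adj v₁ v₂)

/-- The cone over `G`: add a new apex vertex adjacent to all vertices of `G`. -/
def cone (G : SimpleGraph V) : SimpleGraph (Option V) :=
  SimpleGraph.fromRel (fun a b =>
    a = none ∨ ∃ u v : V, a = some u ∧ b = some v ∧ G.Adj u v)

/-- A graph is planar iff it has neither a `K₅` nor a `K₃,₃` minor (Wagner). -/
def Planar (G : SimpleGraph V) : Prop :=
  ¬ IsMinorOf (⊤ : SimpleGraph (Fin 5)) G ∧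
  ¬ IsMinorOf (completeBipartiteGraph (Fin 3) (Fin 3)) G

/-- A graph is outerplanar iff the cone over it is planar (equivalently, it
has a planar embedding with all vertices on the outer face). -/
def Outerplanar (G : SimpleGraph V) : Prop := Planar (cone G)

/-- `v` is a cut vertex of `G`: `G` is connected but deleting `v` disconnects it. -/
def IsCutVertex (G : SimpleGraph V) (v : V) : Prop :=
  G.Connected ∧ ¬ (G.induce {u | u ≠ v}).Connected

/-- `G` is biconnected: connected with no cut vertex. -/
def Biconnected (G : SimpleGraph V) : Prop :=
  G.Connected ∧ ∀ v : V, ¬ IsCutVertex G v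

/-- Degree of a vertex, as the cardinality of its neighbour set. -/
noncomputable def deg (G : SimpleGraph V) (v : V) : ℕ := (G.neighborSet v).ncard

/-- Two `a`-`b` walks are internally vertex-disjoint if they share no
vertices other than `a` and `b`. -/
def InternallyDisjoint {G : SimpleGraph V} {a b : V} (p q : G.Walk a b) : Prop :=
  ∀ w : V, w ∈ p.support → w ∈ q.support → w = a ∨ w = b

/-- A chain of `G` with endpoints `a` and `b`, represented by the path `p`
from `a` to `b`: all internal vertices have degree two, and either both
endpoints have degree greater than two (a path chain), or the chain is a
cycle of degree-two vertices, represented by a Hamiltonian-on-its-support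
path between two adjacent vertices `a` and `b` of the cycle. -/
def IsGraphChain (G : SimpleGraph V) {a b : V} (p : G.Walk a b) : Prop :=
  p.IsPath ∧ 2 ≤ p.length ∧
    (∀ v ∈ p.support, v ≠ a → v ≠ b → deg G v = 2) ∧
    ((2 < deg G a ∧ 2 < deg G b) ∨
      (G.Adj a b ∧ ∀ v ∈ p.support, deg G v = 2))

/-- The graph on the endpoints of the edges in `E'`, with edge set `E'`. -/
def graphOn (E' : Set (Sym2 V)) :
    SimpleGraph {v : V | ∃ e ∈ E', v ∈ e} :=
  (SimpleGraph.fromEdgeSet E').induce {v : V | ∃ e ∈ E', v ∈ e}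

lemma K23aux_two_nbrs [DecidableEq V] {G : SimpleGraph V} {a b : V} {p : G.Walk a b}
    (hp : p.IsPath) {v : V} (hv : v ∈ p.support) (hva : v ≠ a) (hvb : v ≠ b) :
    ∃ s t : V, s ≠ t ∧ G.Adj v s ∧ G.Adj v t := by
  set q := p.takeUntil v hv with hqdef
  set r := p.dropUntil v hv with hrdef
  have hqn : ¬ q.reverse.Nil := Walk.not_nil_of_ne hva
  have hrn : ¬ r.Nil := Walk.not_nil_of_ne hvb
  refine ⟨q.reverse.getVert 1, r.getVert 1, ?_, Walk.adj_snd hqn, Walk.adj_snd hrn⟩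
  intro hst
  have hsq : q.reverse.getVert 1 ∈ q.support := by
    have h1 : (1 : ℕ) ≤ q.reverse.length := Walk.not_nil_iff_lt_length.mp hqn
    have : q.reverse.getVert 1 ∈ q.reverse.support :=
      Walk.mem_support_iff_exists_getVert.mpr ⟨1, rfl, h1⟩
    simpa using this
  have htr : r.getVert 1 ∈ r.support.tail := by
    have h1 : (1 : ℕ) ≤ r.length := Walk.not_nil_iff_lt_length.mp hrn
    have hmem : r.getVert 1 ∈ r.support :=
      Walk.mem_support_iff_exists_getVert.mpr ⟨1, rfl, h1⟩
    have hne : r.getVert 1 ≠ v := fun h => G.ne_of_adj (Walk.adj_snd hrn) h.symm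
    rw [Walk.support_eq_cons] at hmem
    rcases List.mem_cons.mp hmem with h | h
    · exact absurd h hne
    · exact h
  have hnd := hp.support_nodup
  rw [← p.take_spec hv, Walk.support_append, List.nodup_append] at hnd
  exact hnd.2.2 _ hsq _ (hst ▸ htr) rfl

lemma K23aux_reach_induce {G : SimpleGraph V} {S T : Set V} :
    ∀ {a b : ↥S} (p : (G.induce S).Walk a b),
    (∀ v ∈ p.support, (v : V) ∈ T) → ∀ (ha : (a : V) ∈ T) (hb : (b : V) ∈ T),
    (G.induce T).Reachable ⟨a, ha⟩ ⟨b, hb⟩ := by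
  intro a b p
  induction p with
  | nil => intro _ ha hb; exact Reachable.refl _
  | @cons a c b h q ih =>
    intro hT ha hb
    have hc : (c : V) ∈ T := hT c (by simp)
    have hadj : (G.induce T).Adj ⟨a, ha⟩ ⟨c, hc⟩ := h
    exact (hadj.reachable).trans (ih (fun v hv => hT v (by simp [hv])) hc hb)

lemma K23aux_no_adj [DecidableEq V] {G : SimpleGraph V} {u x y z : V}
    (hcon : (G.induce {v | v ≠ u}).Connected)
    (hx : ∀ w, G.Adj x w → w = u ∨ w = y)
    (hy : ∀ w, G.Adj y w → w = u ∨ w = x)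
    (hxy : x ≠ y) (hxu : x ≠ u) (hyu : y ≠ u) (hzu : z ≠ u)
    (hzx : z ≠ x) (hzy : z ≠ y) : False := by
  set S : Set V := {v | v ≠ u}
  obtain ⟨w⟩ := hcon.preconnected ⟨z, hzu⟩ ⟨x, hxu⟩
  set p := w.bypass with hp
  have hpp : p.IsPath := w.bypass_isPath
  have hnn : ¬ p.reverse.Nil := Walk.not_nil_of_ne (by simp [Subtype.ext_iff]; exact Ne.symm hzx)
  have hadj1 : (G.induce S).Adj ⟨x, hxu⟩ (p.reverse.getVert 1) := Walk.adj_snd hnn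
  have hadj1' : G.Adj x ((p.reverse.getVert 1 : ↥S) : V) := hadj1
  have hy1 : ((p.reverse.getVert 1 : ↥S) : V) = y := by
    rcases hx _ hadj1' with h | h
    · exact absurd h (p.reverse.getVert 1).2
    · exact h
  have hymem : (⟨y, hyu⟩ : ↥S) ∈ p.support := by
    have h1 : (1 : ℕ) ≤ p.reverse.length := Walk.not_nil_iff_lt_length.mp hnn
    have : p.reverse.getVert 1 ∈ p.reverse.support :=
      Walk.mem_support_iff_exists_getVert.mpr ⟨1, rfl, h1⟩
    rw [Walk.support_reverse] at this
    have heq : (⟨y, hyu⟩ : ↥S) = p.reverse.getVert 1 := by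
      apply Subtype.ext; exact hy1.symm
    rw [heq]; exact List.mem_reverse.mp this
  obtain ⟨s, t, hst, h1, h2⟩ := K23aux_two_nbrs hpp hymem
    (by simp [Subtype.ext_iff]; exact Ne.symm hzy)
    (by simp [Subtype.ext_iff]; exact Ne.symm hxy)
  have hs : (s : V) = x := by
    rcases hy _ (h1 : G.Adj y (s : V)) with h | h
    · exact absurd h s.2
    · exact h
  have ht : (t : V) = x := by
    rcases hy _ (h2 : G.Adj y (t : V)) with h | h
    · exact absurd h t.2
    · exact h
  exact hst (Subtype.ext (hs.trans ht.symm))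

lemma K23aux_conn [DecidableEq V] {G : SimpleGraph V} {u : V} {A : Set V}
    (hcon : (G.induce {v | v ≠ u}).Connected)
    (hA : ∀ a ∈ A, ∀ s t : V, s ≠ u → t ≠ u → G.Adj a s → G.Adj a t → s = t)
    (hne : ∃ v, v ≠ u ∧ v ∉ A) :
    (G.induce {v | v ≠ u ∧ v ∉ A}).Connected := by
  set S : Set V := {v | v ≠ u}
  set T : Set V := {v | v ≠ u ∧ v ∉ A}
  obtain ⟨v0, hv0u, hv0A⟩ := hne
  rw [connected_iff]
  refine ⟨?_, ⟨⟨v0, hv0u, hv0A⟩⟩⟩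
  rintro ⟨a, hau, haA⟩ ⟨b, hbu, hbA⟩
  obtain ⟨w⟩ := hcon.preconnected ⟨a, hau⟩ ⟨b, hbu⟩
  set p := w.bypass with hpdef
  have hpp : p.IsPath := w.bypass_isPath
  have hsup : ∀ v ∈ p.support, ((v : ↥S) : V) ∈ T := by
    intro v hv
    refine ⟨v.2, fun hvA => ?_⟩
    have hva : v ≠ (⟨a, hau⟩ : ↥S) := by
      intro h
      have h' : (v : V) = a := congrArg Subtype.val h
      exact haA (h' ▸ hvA)
    have hvb : v ≠ (⟨b, hbu⟩ : ↥S) := by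
      intro h
      have h' : (v : V) = b := congrArg Subtype.val h
      exact hbA (h' ▸ hvA)
    obtain ⟨s, t, hst, h1, h2⟩ := K23aux_two_nbrs hpp hv hva hvb
    exact hst (Subtype.ext (hA (v : V) hvA (s : V) (t : V) s.2 t.2 h1 h2))
  exact K23aux_reach_induce p hsup ⟨hau, haA⟩ ⟨hbu, hbA⟩

lemma K23aux_other_nbr [Fintype V] {G : SimpleGraph V} {u x : V}
    (hd : deg G x = 2) (hux : G.Adj u x) :
    ∃ x', x' ≠ u ∧ G.neighborSet x = {u, x'} := by
  obtain ⟨a, b, hab, hset⟩ := Set.ncard_eq_two.mp hd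
  have hu : u ∈ G.neighborSet x := hux.symm
  rw [hset] at hu
  rcases hu with h | h
  · exact ⟨b, fun hb => hab (h ▸ hb ▸ rfl), by rw [hset, h]⟩
  · exact ⟨a, fun ha => hab (h ▸ ha ▸ rfl), by rw [hset, h, Set.pair_comm]⟩

lemma K23aux_singleton_conn (G : SimpleGraph V) (c : V) {S : Set V} (h : S = {c}) :
    (G.induce S).Connected := by
  subst h
  rw [connected_iff]
  refine ⟨fun a b => ?_, ⟨⟨c, rfl⟩⟩⟩
  have : a = b := Subtype.ext (a.2.trans b.2.symm)
  rw [this]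

/-- If a vertex of a biconnected graph is adjacent to three distinct vertices
of degree two, then the graph has a `K₂,₃` minor. -/
theorem K23_minor_of_three_degree_two_neighbors [Fintype V] {G : SimpleGraph V}
    (hB : Biconnected G) {u x y z : V}
    (hxy : x ≠ y) (hxz : x ≠ z) (hyz : y ≠ z)
    (hux : G.Adj u x) (huy : G.Adj u y) (huz : G.Adj u z)
    (hdx : deg G x = 2) (hdy : deg G y = 2) (hdz : deg G z = 2) :
    IsMinorOf (completeBipartiteGraph (Fin 2) (Fin 3)) G := by
  classical
  obtain ⟨hGc, hNoCut⟩ := hB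
  have hcon : (G.induce {v | v ≠ u}).Connected := by
    by_contra h; exact hNoCut u ⟨hGc, h⟩
  have hxu : x ≠ u := fun h => G.irrefl (h ▸ hux)
  have hyu : y ≠ u := fun h => G.irrefl (h ▸ huy)
  have hzu : z ≠ u := fun h => G.irrefl (h ▸ huz)
  obtain ⟨x', hx'u, hNx⟩ := K23aux_other_nbr hdx hux
  obtain ⟨y', hy'u, hNy⟩ := K23aux_other_nbr hdy huy
  obtain ⟨z', hz'u, hNz⟩ := K23aux_other_nbr hdz huz
  have hxw : ∀ w, G.Adj x w → w = u ∨ w = x' := by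
    intro w hw
    have : w ∈ G.neighborSet x := hw
    rw [hNx] at this; exact this
  have hyw : ∀ w, G.Adj y w → w = u ∨ w = y' := by
    intro w hw
    have : w ∈ G.neighborSet y := hw
    rw [hNy] at this; exact this
  have hzw : ∀ w, G.Adj z w → w = u ∨ w = z' := by
    intro w hw
    have : w ∈ G.neighborSet z := hw
    rw [hNz] at this; exact this
  have hx'adj : G.Adj x x' := by
    have : x' ∈ G.neighborSet x := by rw [hNx]; right; rfl
    exact this
  have hy'adj : G.Adj y y' := by
    have : y' ∈ G.neighborSet y := by rw [hNy]; right; rfl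
    exact this
  have hz'adj : G.Adj z z' := by
    have : z' ∈ G.neighborSet z := by rw [hNz]; right; rfl
    exact this
  -- no adjacency among x, y, z
  have hnadj : ∀ a b c : V, a ≠ b → a ≠ c → b ≠ c → a ≠ u → b ≠ u → c ≠ u →
      (∀ w, G.Adj a w → w = u ∨ w = b) → (∀ w, G.Adj b w → w = u ∨ w = a) → False := by
    intro a b c hab hac hbc hau hbu hcu ha hb
    exact K23aux_no_adj hcon ha hb hab hau hbu hcu (Ne.symm hac) (Ne.symm hbc)
  have hnxy : ¬ G.Adj x y := by
    intro h
    have h1 : x' = y := by rcases hxw y h with h' | h'; exact absurd h' hyu; exact h'.symm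
    have h2 : y' = x := by rcases hyw x h.symm with h' | h'; exact absurd h' hxu; exact h'.symm
    exact hnadj x y z hxy hxz hyz hxu hyu hzu (h1 ▸ hxw) (h2 ▸ hyw)
  have hnxz : ¬ G.Adj x z := by
    intro h
    have h1 : x' = z := by rcases hxw z h with h' | h'; exact absurd h' hzu; exact h'.symm
    have h2 : z' = x := by rcases hzw x h.symm with h' | h'; exact absurd h' hxu; exact h'.symm
    exact hnadj x z y hxz hxy (Ne.symm hyz) hxu hzu hyu (h1 ▸ hxw) (h2 ▸ hzw)
  have hnyz : ¬ G.Adj y z := by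
    intro h
    have h1 : y' = z := by rcases hyw z h with h' | h'; exact absurd h' hzu; exact h'.symm
    have h2 : z' = y := by rcases hzw y h.symm with h' | h'; exact absurd h' hyu; exact h'.symm
    exact hnadj y z x hyz (Ne.symm hxy) (Ne.symm hxz) hyu hzu hxu (h1 ▸ hyw) (h2 ▸ hzw)
  set A : Set V := {x, y, z} with hAdef
  have hx'T : x' ≠ u ∧ x' ∉ A := by
    refine ⟨hx'u, ?_⟩
    intro hmem
    rcases hmem with h | h | h
    · exact G.irrefl (h ▸ hx'adj)
    · exact hnxy (h ▸ hx'adj)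
    · exact hnxz (h ▸ hx'adj)
  have hy'T : y' ≠ u ∧ y' ∉ A := by
    refine ⟨hy'u, ?_⟩
    intro hmem
    rcases hmem with h | h | h
    · exact hnxy (h ▸ hy'adj).symm
    · exact G.irrefl (h ▸ hy'adj)
    · exact hnyz (h ▸ hy'adj)
  have hz'T : z' ≠ u ∧ z' ∉ A := by
    refine ⟨hz'u, ?_⟩
    intro hmem
    rcases hmem with h | h | h
    · exact hnxz (h ▸ hz'adj).symm
    · exact hnyz (h ▸ hz'adj).symm
    · exact G.irrefl (h ▸ hz'adj)
  have hA : ∀ a ∈ A, ∀ s t : V, s ≠ u → t ≠ u → G.Adj a s → G.Adj a t → s = t := by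
    intro a ha s t hsu htu h1 h2
    rcases ha with h | h | h <;> subst h
    · rcases hxw s h1 with h' | h'; exact absurd h' hsu
      rcases hxw t h2 with h'' | h''; exact absurd h'' htu
      rw [h', h'']
    · rcases hyw s h1 with h' | h'; exact absurd h' hsu
      rcases hyw t h2 with h'' | h''; exact absurd h'' htu
      rw [h', h'']
    · rcases hzw s h1 with h' | h'; exact absurd h' hsu
      rcases hzw t h2 with h'' | h''; exact absurd h'' htu
      rw [h', h'']
  have hconnT : (G.induce {v | v ≠ u ∧ v ∉ A}).Connected :=
    K23aux_conn hcon hA ⟨x', hx'T.1, hx'T.2⟩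
  set f : V → Option (Fin 2 ⊕ Fin 3) := fun v =>
    if v = u then some (Sum.inl 0) else if v = x then some (Sum.inr 0)
    else if v = y then some (Sum.inr 1) else if v = z then some (Sum.inr 2)
    else some (Sum.inl 1) with hf
  have hfu : f u = some (Sum.inl 0) := by rw [hf]; simp
  have hfx : f x = some (Sum.inr 0) := by rw [hf]; simp [hxu]
  have hfy : f y = some (Sum.inr 1) := by rw [hf]; simp [hyu, Ne.symm hxy]
  have hfz : f z = some (Sum.inr 2) := by rw [hf]; simp [hzu, Ne.symm hxz, Ne.symm hyz]
  have hother : ∀ v, v ≠ u → v ∉ A → f v = some (Sum.inl 1) := by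
    intro v hvu hvA
    simp only [hAdef, Set.mem_insert_iff, Set.mem_singleton_iff, not_or] at hvA
    rw [hf]; simp [hvu, hvA.1, hvA.2.1, hvA.2.2]
  have hset0 : {v | f v = some (Sum.inl 0)} = {u} := by
    ext v
    simp only [Set.mem_setOf_eq, Set.mem_singleton_iff]
    refine ⟨fun h => ?_, fun h => h ▸ hfu⟩
    simp only [hf] at h
    split_ifs at h with h1 h2 h3 h4
    · exact h1
    all_goals simp at h
  have hset1 : {v | f v = some (Sum.inl 1)} = {v | v ≠ u ∧ v ∉ A} := by
    ext v
    simp only [Set.mem_setOf_eq]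
    constructor
    · intro h
      simp only [hf] at h
      split_ifs at h with h1 h2 h3 h4
      · simp at h
      · simp at h
      · simp at h
      · simp at h
      · exact ⟨h1, by simp [hAdef, h2, h3, h4]⟩
    · intro ⟨h1, h2⟩; exact hother v h1 h2
  have hsetx : {v | f v = some (Sum.inr 0)} = {x} := by
    ext v
    simp only [Set.mem_setOf_eq, Set.mem_singleton_iff]
    refine ⟨fun h => ?_, fun h => h ▸ hfx⟩
    simp only [hf] at h
    split_ifs at h with h1 h2 h3 h4
    · simp at h
    · exact h2
    all_goals simp at h
  have hsety : {v | f v = some (Sum.inr 1)} = {y} := by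
    ext v
    simp only [Set.mem_setOf_eq, Set.mem_singleton_iff]
    refine ⟨fun h => ?_, fun h => h ▸ hfy⟩
    simp only [hf] at h
    split_ifs at h with h1 h2 h3 h4
    · simp at h
    · simp at h
    · exact h3
    all_goals simp at h
  have hsetz : {v | f v = some (Sum.inr 2)} = {z} := by
    ext v
    simp only [Set.mem_setOf_eq, Set.mem_singleton_iff]
    refine ⟨fun h => ?_, fun h => h ▸ hfz⟩
    simp only [hf] at h
    split_ifs at h with h1 h2 h3 h4
    · simp at h
    · simp at h
    · simp at h
    · exact h4
    · simp at h
  refine ⟨f, ?_, ?_⟩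
  · intro w
    rcases w with i | j
    · fin_cases i
      · exact K23aux_singleton_conn G u hset0
      · show (G.induce {v | f v = some (Sum.inl 1)}).Connected
        rw [hset1]; exact hconnT
    · fin_cases j
      · exact K23aux_singleton_conn G x hsetx
      · exact K23aux_singleton_conn G y hsety
      · exact K23aux_singleton_conn G z hsetz
  · intro w₁ w₂ hadj
    rcases w₁ with i | j <;> rcases w₂ with i' | j'
    · simp at hadj
    · fin_cases i <;> fin_cases j'
      · exact ⟨u, x, hfu, hfx, hux⟩
      · exact ⟨u, y, hfu, hfy, huy⟩
      · exact ⟨u, z, hfu, hfz, huz⟩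
      · exact ⟨x', x, hother x' hx'T.1 hx'T.2, hfx, hx'adj.symm⟩
      · exact ⟨y', y, hother y' hy'T.1 hy'T.2, hfy, hy'adj.symm⟩
      · exact ⟨z', z, hother z' hz'T.1 hz'T.2, hfz, hz'adj.symm⟩
    · fin_cases j <;> fin_cases i'
      · exact ⟨x, u, hfx, hfu, hux.symm⟩
      · exact ⟨x, x', hfx, hother x' hx'T.1 hx'T.2, hx'adj⟩
      · exact ⟨y, u, hfy, hfu, huy.symm⟩
      · exact ⟨y, y', hfy, hother y' hy'T.1 hy'T.2, hy'adj⟩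
      · exact ⟨z, u, hfz, hfu, huz.symm⟩
      · exact ⟨z, z', hfz, hother z' hz'T.1 hz'T.2, hz'adj⟩
    · simp at hadj
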